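/- Let S¹ = {(x, y) ∈ ℝ² : x² + y² = 1} and define ψ : ℝ × S¹ → S¹ by ψ_t(x, y) = (x + t y, y) / ‖(x + t y, y)‖. Then the flow ψ is chain transitive on S¹: for all points p, q ∈ S¹ and all ε > 0 and T > 0, there exist an integer m ≥ 1, points p = p₀, p₁, …, p_m = q in S¹ and real times t₀, …, t_{m−1} with t_i ≥ T for all i, such that dist(ψ_{t_i}(p_i), p_{i+1}) < ε for all 0 ≤ i ≤ m − 1. -/

import Mathlib

open Filter Topology

/-- The unipotent flow `[[1, t], [0, 1]]` of `SL(2,ℝ)` acting on `SO(2) ≅ S¹` via the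
Gram–Schmidt projection. -/
noncomputable def uniFlow (t : ℝ) (p : ℝ × ℝ) : ℝ × ℝ :=
  ((p.1 + t * p.2) / Real.sqrt ((p.1 + t * p.2) ^ 2 + p.2 ^ 2),
   p.2 / Real.sqrt ((p.1 + t * p.2) ^ 2 + p.2 ^ 2))

/-- The Euclidean distance on `ℝ²`. -/
noncomputable def euclDist (a b : ℝ × ℝ) : ℝ :=
  Real.sqrt ((a.1 - b.1) ^ 2 + (a.2 - b.2) ^ 2)

lemma uniFlow_fixed (t σ : ℝ) (hσ : σ = 1 ∨ σ = -1) : uniFlow t (σ, 0) = (σ, 0) := by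
  rcases hσ with h | h <;> subst h <;> simp [uniFlow]

lemma euclDist_self (a : ℝ × ℝ) : euclDist a a = 0 := by
  simp [euclDist]

lemma aux2 (s y σ ε : ℝ) (hσ2 : σ ^ 2 = 1) (hy1 : y ^ 2 ≤ 1)
    (hεs : 1 + 1/ε ≤ σ * s) (hε : 0 < ε) :
    Real.sqrt ((s / Real.sqrt (s ^ 2 + y ^ 2) - σ) ^ 2 +
      (y / Real.sqrt (s ^ 2 + y ^ 2) - 0) ^ 2) < ε := by
  have hu : 0 < σ * s := lt_of_lt_of_le (by positivity) hεs
  have hs0 : s ≠ 0 := by rintro rfl; simp at hu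
  set r := Real.sqrt (s ^ 2 + y ^ 2) with hr
  have hr2 : r ^ 2 = s ^ 2 + y ^ 2 := Real.sq_sqrt (by positivity)
  have hrpos : 0 < r := Real.sqrt_pos.mpr (by positivity)
  clear_value r
  have hrne : r ≠ 0 := ne_of_gt hrpos
  have hrs : σ * s ≤ r := by nlinarith
  have h9 : 0 < r + σ * s := by linarith
  have h8 : ε * (1 + 1/ε) = ε + 1 := by field_simp
  have hb1 : ε + 1 ≤ ε * (σ * s) := by
    nlinarith [mul_le_mul_of_nonneg_left hεs (le_of_lt hε)]
  have hA : 2 * (ε + 1) ^ 2 ≤ ε ^ 2 * r * (r + σ * s) := by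
    nlinarith [mul_le_mul hb1 hb1 (by positivity) (by nlinarith : (0:ℝ) ≤ ε * (σ * s)),
      mul_nonneg (sq_nonneg ε) (mul_nonneg (sub_nonneg.2 hrs) (le_of_lt h9)),
      mul_nonneg (sq_nonneg ε) (mul_nonneg (le_of_lt hu) (sub_nonneg.2 hrs))]
  have h4 : (r - σ * s) * (r + σ * s) = y ^ 2 := by nlinarith
  have key : 2 * r - 2 * (σ * s) < ε ^ 2 * r := by
    have hlt : (2 * r - 2 * (σ * s)) * (r + σ * s) < (ε ^ 2 * r) * (r + σ * s) := by
      nlinarith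
    exact lt_of_mul_lt_mul_right hlt (le_of_lt h9)
  have e2 : (s / r - σ) ^ 2 + (y / r - 0) ^ 2 = (2 * r - 2 * (σ * s)) / r := by
    field_simp
    ring_nf
    linear_combination (-1) * hr2 + r ^ 2 * hσ2
  rw [e2, Real.sqrt_lt' hε, div_lt_iff₀ hrpos]
  linarith

lemma flow_to_fixed (x y σ ε T : ℝ) (hxy : x ^ 2 + y ^ 2 = 1)
    (hσ : σ = 1 ∨ σ = -1) (hsy : 0 < σ * y) (hε : 0 < ε) (hT : 0 < T) :
    ∃ t, T ≤ t ∧ euclDist (uniFlow t (x, y)) (σ, 0) < ε := by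
  have hσ2 : σ ^ 2 = 1 := by rcases hσ with h | h <;> simp [h]
  have hy : y ≠ 0 := by rintro rfl; simp at hsy
  have hay : 0 < |y| := abs_pos.mpr hy
  have habsy : |y| = σ * y := by
    rcases hσ with h | h <;> subst h
    · rw [one_mul]; exact abs_of_pos (by simpa using hsy)
    · rw [abs_of_neg (by nlinarith)]; ring
  refine ⟨T + (|x| + 1 + 1/ε) / |y|, le_add_of_nonneg_right (by positivity), ?_⟩
  have hεs : 1 + 1/ε ≤ σ * (x + (T + (|x| + 1 + 1/ε) / |y|) * y) := by
    have h2 : -|x| ≤ σ * x := by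
      rcases hσ with h | h <;> subst h
      · simpa using neg_abs_le x
      · simp only [neg_one_mul]; linarith [le_abs_self x]
    have h3 : (T + (|x| + 1 + 1/ε) / |y|) * |y| = T * |y| + (|x| + 1 + 1/ε) := by
      field_simp
    have h5 : σ * (x + (T + (|x| + 1 + 1/ε) / |y|) * y)
        = σ * x + (T + (|x| + 1 + 1/ε) / |y|) * |y| := by rw [habsy]; ring
    nlinarith [mul_pos hT hay]
  have hy1 : y ^ 2 ≤ 1 := by nlinarith [sq_nonneg x]
  exact aux2 _ y σ ε hσ2 hy1 hεs hε

lemma flow_to_fixed' (z : ℝ × ℝ) (σ ε T : ℝ) (hz : z.1 ^ 2 + z.2 ^ 2 = 1)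
    (hσ : σ = 1 ∨ σ = -1) (hsy : 0 < σ * z.2) (hε : 0 < ε) (hT : 0 < T) :
    ∃ t, T ≤ t ∧ euclDist (uniFlow t z) (σ, 0) < ε := by
  obtain ⟨t, h1, h2⟩ := flow_to_fixed z.1 z.2 σ ε T hz hσ hsy hε hT
  exact ⟨t, h1, by rwa [Prod.mk.eta] at h2⟩

lemma flow_hit (a q : ℝ × ℝ) (hq : q.1 ^ 2 + q.2 ^ 2 = 1) (ha2 : a.2 ≠ 0) (hq2 : q.2 ≠ 0)
    (hsign : 0 < a.2 / q.2) :
    uniFlow (q.1 / q.2 - a.1 / a.2) a = q := by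
  have hs : a.1 + (q.1 / q.2 - a.1 / a.2) * a.2 = a.2 * (q.1 / q.2) := by
    field_simp
    ring
  have hrr : (a.2 * (q.1 / q.2)) ^ 2 + a.2 ^ 2 = (a.2 / q.2) ^ 2 := by
    field_simp
    linear_combination hq
  have hroot : Real.sqrt ((a.1 + (q.1 / q.2 - a.1 / a.2) * a.2) ^ 2 + a.2 ^ 2)
      = a.2 / q.2 := by
    rw [hs, hrr, Real.sqrt_sq (le_of_lt hsign)]
  unfold uniFlow
  have h1 : (a.1 + (q.1 / q.2 - a.1 / a.2) * a.2) / (a.2 / q.2) = q.1 := by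
    rw [hs]; field_simp
  have h2 : a.2 / (a.2 / q.2) = q.2 := by
    field_simp
  rw [hroot, h1, h2]

lemma jump_dist (σ τ η ε : ℝ) (hσ : σ ^ 2 = 1) (hτ : τ ^ 2 = 1) (hη : 0 < η)
    (hη1 : η ≤ 1/2) (hηε : η ≤ ε/2) (hε : 0 < ε) :
    euclDist (σ, 0) (σ * Real.sqrt (1 - η ^ 2), τ * η) < ε := by
  unfold euclDist
  simp only
  set w := Real.sqrt (1 - η ^ 2) with hw
  have hw2 : w ^ 2 = 1 - η ^ 2 := Real.sq_sqrt (by nlinarith)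
  have hw0 : 0 ≤ w := Real.sqrt_nonneg _
  have hw1 : w ≤ 1 := by nlinarith
  clear_value w
  rw [Real.sqrt_lt' hε]
  have h1 : (σ - σ * w) ^ 2 + (0 - τ * η) ^ 2 = (1 - w) ^ 2 + η ^ 2 := by
    have e1 : (σ - σ * w) ^ 2 = σ ^ 2 * (1 - w) ^ 2 := by ring
    have e2 : (0 - τ * η) ^ 2 = τ ^ 2 * η ^ 2 := by ring
    rw [e1, hσ, e2, hτ]
    ring
  rw [h1]
  have h2 : 1 - w ≤ η ^ 2 := by nlinarith
  nlinarith

set_option maxHeartbeats 1600000 in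
/-- The unipotent flow is chain transitive on the circle: between any two points of `S¹`
there is an `(ε, T)`-chain for all `ε, T > 0`. -/
theorem uniFlow_chain_transitive
    (p q : ℝ × ℝ) (hp : p.1 ^ 2 + p.2 ^ 2 = 1) (hq : q.1 ^ 2 + q.2 ^ 2 = 1)
    (ε T : ℝ) (hε : 0 < ε) (hT : 0 < T) :
    ∃ (m : ℕ) (c : ℕ → ℝ × ℝ) (ts : ℕ → ℝ),
      1 ≤ m ∧ c 0 = p ∧ c m = q ∧
      (∀ i ≤ m, (c i).1 ^ 2 + (c i).2 ^ 2 = 1) ∧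
      (∀ i < m, T ≤ ts i) ∧
      (∀ i < m, euclDist (uniFlow (ts i) (c i)) (c (i + 1)) < ε) := by
  -- signs
  set σ : ℝ := if 0 < p.2 then 1 else if p.2 < 0 then -1 else p.1 with hσdef
  set τ : ℝ := if 0 < q.2 then 1 else if q.2 < 0 then -1 else q.1 with hτdef
  have hp1pm : p.2 = 0 → p.1 = 1 ∨ p.1 = -1 := by
    intro h
    apply sq_eq_one_iff.mp
    rw [h] at hp; linarith
  have hq1pm : q.2 = 0 → q.1 = 1 ∨ q.1 = -1 := by
    intro h
    apply sq_eq_one_iff.mp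
    rw [h] at hq; linarith
  have hσpm : σ = 1 ∨ σ = -1 := by
    rw [hσdef]
    rcases lt_trichotomy p.2 0 with h | h | h
    · simp [not_lt.mpr (le_of_lt h), h]
    · simpa [h] using hp1pm h
    · simp [h]
  have hτpm : τ = 1 ∨ τ = -1 := by
    rw [hτdef]
    rcases lt_trichotomy q.2 0 with h | h | h
    · simp [not_lt.mpr (le_of_lt h), h]
    · simpa [h] using hq1pm h
    · simp [h]
  have hσ2 : σ ^ 2 = 1 := sq_eq_one_iff.mpr hσpm
  have hτ2 : τ ^ 2 = 1 := sq_eq_one_iff.mpr hτpm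
  have hσp0 : p.2 = 0 → p = (σ, 0) := by
    intro h
    have h1 : σ = p.1 := by
      rw [hσdef, if_neg (by rw [h]; exact lt_irrefl 0), if_neg (by rw [h]; exact lt_irrefl 0)]
    exact Prod.ext_iff.mpr ⟨h1.symm, h⟩
  have hσsy : p.2 ≠ 0 → 0 < σ * p.2 := by
    intro h
    rcases lt_trichotomy p.2 0 with h' | h' | h'
    · have h1 : σ = -1 := by rw [hσdef, if_neg (by linarith), if_pos h']
      rw [h1]; nlinarith
    · exact absurd h' h
    · have h1 : σ = 1 := by rw [hσdef, if_pos h']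
      rw [h1]; linarith
  have hτq0 : q.2 = 0 → q = (τ, 0) := by
    intro h
    have h1 : τ = q.1 := by
      rw [hτdef, if_neg (by rw [h]; exact lt_irrefl 0), if_neg (by rw [h]; exact lt_irrefl 0)]
    exact Prod.ext_iff.mpr ⟨h1.symm, h⟩
  have hτsgn : q.2 ≠ 0 → 0 < τ / q.2 := by
    intro h
    rcases lt_trichotomy q.2 0 with h' | h' | h'
    · have h1 : τ = -1 := by rw [hτdef, if_neg (by linarith), if_pos h']
      rw [h1, div_pos_iff]
      right; constructor <;> linarith
    · exact absurd h' h
    · have h1 : τ = 1 := by rw [hτdef, if_pos h']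
      rw [h1, div_pos_iff]
      left; constructor <;> linarith
  clear_value σ τ
  clear hσdef hτdef
  -- the jump size η
  set η : ℝ := min (ε/2) (min (1/2) (1/(2*(T + |q.1/q.2| + 1)))) with hηdef
  have hη0 : 0 < η := by
    apply lt_min (by positivity)
    apply lt_min (by norm_num)
    positivity
  have hηε : η ≤ ε/2 := min_le_left _ _
  have hη1 : η ≤ 1/2 := le_trans (min_le_right _ _) (min_le_left _ _)
  have hηT : η ≤ 1/(2*(T + |q.1/q.2| + 1)) := le_trans (min_le_right _ _) (min_le_right _ _)
  clear_value η
  clear hηdef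
  have hη2 : (0:ℝ) ≤ 1 - η ^ 2 := by nlinarith
  have hw2 : Real.sqrt (1 - η ^ 2) ^ 2 = 1 - η ^ 2 := Real.sq_sqrt hη2
  have hw0 : (0:ℝ) ≤ Real.sqrt (1 - η ^ 2) := Real.sqrt_nonneg _
  have hwhalf : 1/2 ≤ Real.sqrt (1 - η ^ 2) := by nlinarith
  -- the chain points
  set c2 : ℝ × ℝ := if σ = -τ then (σ, 0) else (σ * Real.sqrt (1 - η ^ 2), -σ * η) with hc2def
  set aa : ℝ × ℝ := (-τ * Real.sqrt (1 - η ^ 2), τ * η) with haadef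
  clear_value c2 aa
  -- circle memberships
  have hcircσ : σ ^ 2 + (0:ℝ) ^ 2 = 1 := by rw [hσ2]; ring
  have hcircτ : (-τ) ^ 2 + (0:ℝ) ^ 2 = 1 := by rw [neg_sq, hτ2]; ring
  have hcircc2 : c2.1 ^ 2 + c2.2 ^ 2 = 1 := by
    by_cases h : σ = -τ
    · rw [hc2def, if_pos h]
      exact hcircσ
    · rw [hc2def, if_neg h]
      show (σ * Real.sqrt (1 - η ^ 2)) ^ 2 + (-σ * η) ^ 2 = 1
      linear_combination σ ^ 2 * hw2 + hσ2
  have hcircaa : aa.1 ^ 2 + aa.2 ^ 2 = 1 := by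
    rw [haadef]
    show (-τ * Real.sqrt (1 - η ^ 2)) ^ 2 + (τ * η) ^ 2 = 1
    linear_combination τ ^ 2 * hw2 + hτ2
  -- step 0 : flow from p to (σ, 0)
  have step0 : ∃ t0, T ≤ t0 ∧ euclDist (uniFlow t0 p) (σ, 0) < ε := by
    by_cases h : p.2 = 0
    · refine ⟨T, le_refl T, ?_⟩
      rw [hσp0 h, uniFlow_fixed T σ hσpm, euclDist_self]
      exact hε
    · exact flow_to_fixed' p σ ε T hp hσpm (hσsy h) hε hT
  obtain ⟨t0, ht0, hd0⟩ := step0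
  -- step 1 : jump from (σ, 0) to c2
  have step1 : euclDist (uniFlow T (σ, 0)) c2 < ε := by
    rw [uniFlow_fixed T σ hσpm, hc2def]
    by_cases h : σ = -τ
    · rw [if_pos h, euclDist_self]; exact hε
    · rw [if_neg h]
      exact jump_dist σ (-σ) η ε hσ2 (by rw [neg_sq]; exact hσ2) hη0 hη1 hηε hε
  -- step 2 : flow from c2 to (-τ, 0)
  have step2 : ∃ t2, T ≤ t2 ∧ euclDist (uniFlow t2 c2) (-τ, 0) < ε := by
    have hτpm' : -τ = 1 ∨ -τ = -1 := by rcases hτpm with h | h <;> simp [h]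
    by_cases h : σ = -τ
    · refine ⟨T, le_refl T, ?_⟩
      rw [hc2def, if_pos h, h, uniFlow_fixed T (-τ) hτpm', euclDist_self]
      exact hε
    · have hστ : σ = τ := by
        rcases hσpm with h1 | h1 <;> rcases hτpm with h2 | h2 <;>
          simp [h1, h2] at h ⊢ <;> norm_num at h
      apply flow_to_fixed' c2 (-τ) ε T hcircc2 hτpm' ?_ hε hT
      rw [hc2def, if_neg h]
      simp only
      rw [hστ]
      have : -τ * (-τ * η) = τ ^ 2 * η := by ring
      rw [this, hτ2]
      linarith
  obtain ⟨t2, ht2, hd2⟩ := step2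
  -- step 3 : jump from (-τ, 0) to aa
  have step3 : euclDist (uniFlow T (-τ, 0)) aa < ε := by
    have hτpm' : -τ = 1 ∨ -τ = -1 := by rcases hτpm with h | h <;> simp [h]
    rw [uniFlow_fixed T (-τ) hτpm', haadef]
    exact jump_dist (-τ) τ η ε (by rw [neg_sq]; exact hτ2) hτ2 hη0 hη1 hηε hε
  -- step 4 : flow from aa to q
  have step4 : ∃ t4, T ≤ t4 ∧ euclDist (uniFlow t4 aa) q < ε := by
    have haa2 : aa.2 = τ * η := by rw [haadef]
    have haa1 : aa.1 = -τ * Real.sqrt (1 - η ^ 2) := by rw [haadef]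
    by_cases h : q.2 = 0
    · obtain ⟨t4, h1, h2⟩ := flow_to_fixed' aa τ ε T hcircaa hτpm
        (by rw [haa2]; have : τ * (τ * η) = τ ^ 2 * η := by ring
            rw [this, hτ2]; linarith) hε hT
      exact ⟨t4, h1, by rwa [← hτq0 h] at h2⟩
    · have hτne : τ ≠ 0 := by rcases hτpm with h' | h' <;> rw [h'] <;> norm_num
      have haa2ne : aa.2 ≠ 0 := by rw [haa2]; positivity
      have hsign : 0 < aa.2 / q.2 := by
        rw [haa2]
        have : τ * η / q.2 = η * (τ / q.2) := by ring
        rw [this]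
        exact mul_pos hη0 (hτsgn h)
      refine ⟨q.1 / q.2 - aa.1 / aa.2, ?_, ?_⟩
      · have hdiv : aa.1 / aa.2 = -(Real.sqrt (1 - η ^ 2) / η) := by
          rw [haa1, haa2]
          field_simp
        rw [hdiv]
        have hK : (T + |q.1/q.2| + 1) * (2 * η) ≤ 1 := by
          rw [le_div_iff₀ (by positivity : (0:ℝ) < 2*(T + |q.1/q.2| + 1))] at hηT
          nlinarith
        have hw : 1 / (2 * η) ≤ Real.sqrt (1 - η ^ 2) / η := by
          rw [div_le_div_iff₀ (by positivity) hη0]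
          nlinarith [mul_le_mul_of_nonneg_right hwhalf (by linarith : (0:ℝ) ≤ 2 * η)]
        have hK2 : T + |q.1/q.2| + 1 ≤ 1 / (2 * η) := by
          rw [le_div_iff₀ (by positivity : (0:ℝ) < 2 * η)]
          exact hK
        have habs : -|q.1/q.2| ≤ q.1/q.2 := neg_abs_le _
        linarith
      · rw [flow_hit aa q hq haa2ne h hsign, euclDist_self]
        exact hε
  obtain ⟨t4, ht4, hd4⟩ := step4
  -- assemble the chain
  refine ⟨5,
    (fun i => if i = 0 then p else if i = 1 then (σ, 0) else if i = 2 then c2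
      else if i = 3 then (-τ, 0) else if i = 4 then aa else q),
    (fun i => if i = 0 then t0 else if i = 2 then t2 else if i = 4 then t4 else T),
    by norm_num, by norm_num, by norm_num, ?_, ?_, ?_⟩
  · intro i hi
    interval_cases i
    · exact hp
    · exact hcircσ
    · exact hcircc2
    · exact hcircτ
    · exact hcircaa
    · exact hq
  · intro i hi
    interval_cases i
    · exact ht0
    · exact le_refl T
    · exact ht2
    · exact le_refl T
    · exact ht4
  · intro i hi
    interval_cases i
    · exact hd0
    · exact step1
    · exact hd2
    · exact step3
    · exact hd4
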